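/- Let (S, 𝒮) be a measurable space, let κ and κ' be Markov kernels from S to S, let μ be a probability measure on S, and let ε ≥ 0 satisfy |κ(s, A) − κ'(s, A)| ≤ ε for every s ∈ S and every measurable set A. Let u : S → ℝ be measurable with |u(s)| ≤ 1 for all s, and let γ ∈ (0,1). Then for every positive integer T, |Σ_{t=1}^{T} γ^{t−1} ( ∫ u d(μ ∘ κ^{∘(t−1)}) − ∫ u d(μ ∘ κ'^{∘(t−1)}) )| ≤ 2ε/(1−γ)², where κ^{∘m} denotes the m-fold composition of the kernel with itself. -/

import Mathlib

open MeasureTheory ProbabilityTheory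

/-- The distribution of the state after `n` transitions of the Markov kernel `κ`,
starting from initial distribution `μ`. -/
noncomputable def iterKernel {S : Type*} [MeasurableSpace S]
    (κ : Kernel S S) : ℕ → Measure S → Measure S
  | 0, μ => μ
  | n + 1, μ => (iterKernel κ n μ).bind (fun s => κ s)

section Aux

variable {S : Type*} [MeasurableSpace S]

lemma integrable_of_bdd1 {μ : Measure S} [IsFiniteMeasure μ] {f : S → ℝ}
    (hf : Measurable f) (hbd : ∀ s, |f s| ≤ 1) : Integrable f μ :=
  (integrable_const (1 : ℝ)).mono' hf.aestronglyMeasurable (Filter.Eventually.of_forall hbd)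

set_option maxHeartbeats 1000000 in
/-- Core total-variation lemma for `[0,1]`-valued functions. -/
lemma abs_integral_sub_le_of_nonneg (p q : Measure S) [IsProbabilityMeasure p]
    [IsProbabilityMeasure q] {ε : ℝ}
    (h : ∀ A : Set S, MeasurableSet A → |(p A).toReal - (q A).toReal| ≤ ε)
    {f : S → ℝ} (hf : Measurable f) (h0 : ∀ s, 0 ≤ f s) (h1 : ∀ s, f s ≤ 1) :
    |∫ x, f x ∂p - ∫ x, f x ∂q| ≤ ε := by
  have hbd : ∀ s, |f s| ≤ 1 := fun s => abs_le.2 ⟨le_trans (by norm_num) (h0 s), h1 s⟩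
  have hip : Integrable f p := integrable_of_bdd1 hf hbd
  have hiq : Integrable f q := integrable_of_bdd1 hf hbd
  set F : ℝ → ℝ := fun t => (p {a | t < f a}).toReal with hF
  set G : ℝ → ℝ := fun t => (q {a | t < f a}).toReal with hG
  have hset : ∀ t : ℝ, MeasurableSet {a | t < f a} := fun t =>
    measurableSet_lt measurable_const hf
  have hFmeas : Measurable F := by
    apply Antitone.measurable
    intro t t' htt'
    exact ENNReal.toReal_mono (measure_ne_top _ _)
      (measure_mono (fun a ha => lt_of_le_of_lt htt' ha))
  have hGmeas : Measurable G := by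
    apply Antitone.measurable
    intro t t' htt'
    exact ENNReal.toReal_mono (measure_ne_top _ _)
      (measure_mono (fun a ha => lt_of_le_of_lt htt' ha))
  have hzero : ∀ t : ℝ, 1 ≤ t → ({a | t < f a} : Set S) = ∅ := by
    intro t ht
    ext a
    simp only [Set.mem_setOf_eq, Set.mem_empty_iff_false, iff_false, not_lt]
    exact le_trans (h1 a) ht
  have hFrestrict : ∫ t in Set.Ioi (0:ℝ), F t = ∫ t in Set.Ioc (0:ℝ) 1, F t := by
    refine setIntegral_eq_of_subset_of_ae_diff_eq_zero measurableSet_Ioi.nullMeasurableSet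
      Set.Ioc_subset_Ioi_self (Filter.Eventually.of_forall fun t ht => ?_)
    have h1t : 1 < t := by
      by_contra hc
      exact ht.2 ⟨ht.1, le_of_not_gt hc⟩
    simp [hF, hzero t h1t.le]
  have hGrestrict : ∫ t in Set.Ioi (0:ℝ), G t = ∫ t in Set.Ioc (0:ℝ) 1, G t := by
    refine setIntegral_eq_of_subset_of_ae_diff_eq_zero measurableSet_Ioi.nullMeasurableSet
      Set.Ioc_subset_Ioi_self (Filter.Eventually.of_forall fun t ht => ?_)
    have h1t : 1 < t := by
      by_contra hc
      exact ht.2 ⟨ht.1, le_of_not_gt hc⟩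
    simp [hG, hzero t h1t.le]
  have hFint : IntegrableOn F (Set.Ioc (0:ℝ) 1) := by
    refine (integrable_const (1:ℝ)).mono' (hFmeas.aestronglyMeasurable) ?_
    refine Filter.Eventually.of_forall fun t => ?_
    rw [Real.norm_eq_abs, abs_of_nonneg ENNReal.toReal_nonneg]
    exact ENNReal.toReal_le_of_le_ofReal zero_le_one (by simp [prob_le_one])
  have hGint : IntegrableOn G (Set.Ioc (0:ℝ) 1) := by
    refine (integrable_const (1:ℝ)).mono' (hGmeas.aestronglyMeasurable) ?_
    refine Filter.Eventually.of_forall fun t => ?_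
    rw [Real.norm_eq_abs, abs_of_nonneg ENNReal.toReal_nonneg]
    exact ENNReal.toReal_le_of_le_ofReal zero_le_one (by simp [prob_le_one])
  rw [hip.integral_eq_integral_meas_lt (Filter.Eventually.of_forall h0),
    hiq.integral_eq_integral_meas_lt (Filter.Eventually.of_forall h0)]
  rw [show (∫ t in Set.Ioi (0:ℝ), p.real {a | t < f a}) = ∫ t in Set.Ioi (0:ℝ), F t from rfl,
    show (∫ t in Set.Ioi (0:ℝ), q.real {a | t < f a}) = ∫ t in Set.Ioi (0:ℝ), G t from rfl,
    hFrestrict, hGrestrict, ← integral_sub hFint hGint]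
  calc |∫ t in Set.Ioc (0:ℝ) 1, (F t - G t)| ≤ ε * (volume (Set.Ioc (0:ℝ) 1)).toReal := by
        rw [← Real.norm_eq_abs]
        refine norm_setIntegral_le_of_norm_le_const measure_Ioc_lt_top ?_
        intro t _
        rw [Real.norm_eq_abs]
        exact h _ (hset t)
    _ = ε := by simp

/-- Total-variation lemma for functions bounded by 1 in absolute value. -/
lemma abs_integral_sub_le_of_bdd (p q : Measure S) [IsProbabilityMeasure p]
    [IsProbabilityMeasure q] {ε : ℝ}
    (h : ∀ A : Set S, MeasurableSet A → |(p A).toReal - (q A).toReal| ≤ ε)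
    {f : S → ℝ} (hf : Measurable f) (hbd : ∀ s, |f s| ≤ 1) :
    |∫ x, f x ∂p - ∫ x, f x ∂q| ≤ 2 * ε := by
  set g : S → ℝ := fun s => (f s + 1) / 2 with hg
  have hgmeas : Measurable g := (hf.add_const 1).div_const 2
  have hg0 : ∀ s, 0 ≤ g s := fun s => by
    have := (abs_le.1 (hbd s)).1; simp only [hg]; linarith
  have hg1 : ∀ s, g s ≤ 1 := fun s => by
    have := (abs_le.1 (hbd s)).2; simp only [hg]; linarith
  have key : ∀ (m : Measure S) [IsProbabilityMeasure m],
      ∫ x, g x ∂m = ((∫ x, f x ∂m) + 1) / 2 := by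
    intro m _
    simp only [hg, div_eq_mul_inv]
    rw [integral_mul_const, integral_add (integrable_of_bdd1 hf hbd) (integrable_const 1)]
    simp
  have h2 := abs_integral_sub_le_of_nonneg p q h hgmeas hg0 hg1
  rw [key p, key q] at h2
  have heq : ((∫ x, f x ∂p) + 1) / 2 - ((∫ x, f x ∂q) + 1) / 2
      = ((∫ x, f x ∂p) - ∫ x, f x ∂q) / 2 := by ring
  rw [heq, abs_div, abs_two] at h2
  linarith
lemma iterKernel_isProb (κ : Kernel S S) [IsMarkovKernel κ]
    (μ : Measure S) [IsProbabilityMeasure μ] :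
    ∀ t, IsProbabilityMeasure (iterKernel κ t μ)
  | 0 => by rw [iterKernel]; infer_instance
  | t + 1 => by
    haveI := iterKernel_isProb κ μ t
    constructor
    rw [iterKernel, Measure.bind_apply MeasurableSet.univ κ.measurable.aemeasurable]
    simp

lemma integral_bind_kernel (μ : Measure S) [IsProbabilityMeasure μ]
    (κ : Kernel S S) [IsMarkovKernel κ] {f : S → ℝ}
    (hf : Measurable f) (hbd : ∀ s, |f s| ≤ 1) :
    ∫ x, f x ∂(μ.bind (fun s => κ s)) = ∫ a, ∫ b, f b ∂(κ a) ∂μ := by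
  have hmap : μ.bind (fun s => κ s) = (μ ⊗ₘ κ).map Prod.snd := by
    ext A hA
    rw [Measure.map_apply measurable_snd hA, Measure.bind_apply hA κ.measurable.aemeasurable,
      Measure.compProd_apply (measurable_snd hA)]
    rfl
  rw [hmap, integral_map measurable_snd.aemeasurable hf.aestronglyMeasurable]
  exact Measure.integral_compProd
    (integrable_of_bdd1 (hf.comp measurable_snd) (fun z => hbd z.2))

lemma iter_diff (κ κ' : Kernel S S) [IsMarkovKernel κ] [IsMarkovKernel κ']
    (μ : Measure S) [IsProbabilityMeasure μ] {ε : ℝ}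
    (hclose : ∀ s : S, ∀ A : Set S, MeasurableSet A →
      |(κ s A).toReal - (κ' s A).toReal| ≤ ε) :
    ∀ (t : ℕ) (f : S → ℝ), Measurable f → (∀ s, |f s| ≤ 1) →
      |∫ x, f x ∂(iterKernel κ t μ) - ∫ x, f x ∂(iterKernel κ' t μ)| ≤ 2 * t * ε
  | 0, f, hf, hbd => by simp [iterKernel]
  | t + 1, f, hf, hbd => by
    haveI hP := iterKernel_isProb κ μ t
    haveI hQ := iterKernel_isProb κ' μ t
    set g : S → ℝ := fun a => ∫ b, f b ∂(κ a) with hgdef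
    set g' : S → ℝ := fun a => ∫ b, f b ∂(κ' a) with hg'def
    have hgmeas : Measurable g := by
      have : StronglyMeasurable (fun z : S × S => f z.2) :=
        hf.stronglyMeasurable.comp_measurable measurable_snd
      exact (this.integral_kernel_prod_right' (κ := κ)).measurable
    have hg'meas : Measurable g' := by
      have : StronglyMeasurable (fun z : S × S => f z.2) :=
        hf.stronglyMeasurable.comp_measurable measurable_snd
      exact (this.integral_kernel_prod_right' (κ := κ')).measurable
    have habs : ∀ (m : Measure S) [IsProbabilityMeasure m], |∫ b, f b ∂m| ≤ 1 := by
      intro m _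
      calc |∫ b, f b ∂m| ≤ ∫ b, |f b| ∂m := by
            simpa [Real.norm_eq_abs] using norm_integral_le_integral_norm (μ := m) f
        _ ≤ ∫ _b, (1:ℝ) ∂m := integral_mono (integrable_of_bdd1 hf hbd).abs
            (integrable_const 1) (fun b => hbd b)
        _ = 1 := by simp
    have hgbd : ∀ a, |g a| ≤ 1 := fun a => habs (κ a)
    have hg'bd : ∀ a, |g' a| ≤ 1 := fun a => habs (κ' a)
    have hdiffbd : ∀ a, |g a - g' a| ≤ 2 * ε := fun a =>
      abs_integral_sub_le_of_bdd (κ a) (κ' a) (hclose a) hf hbd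
    have e1 : ∫ x, f x ∂(iterKernel κ (t+1) μ) = ∫ a, g a ∂(iterKernel κ t μ) := by
      rw [iterKernel]
      exact integral_bind_kernel _ κ hf hbd
    have e2 : ∫ x, f x ∂(iterKernel κ' (t+1) μ) = ∫ a, g' a ∂(iterKernel κ' t μ) := by
      rw [iterKernel]
      exact integral_bind_kernel _ κ' hf hbd
    rw [e1, e2]
    have IH := iter_diff κ κ' μ hclose t g hgmeas hgbd
    have hsecond : |∫ a, g a ∂(iterKernel κ' t μ) - ∫ a, g' a ∂(iterKernel κ' t μ)| ≤ 2 * ε := by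
      rw [← integral_sub (integrable_of_bdd1 hgmeas hgbd) (integrable_of_bdd1 hg'meas hg'bd)]
      calc |∫ a, (g a - g' a) ∂(iterKernel κ' t μ)|
          ≤ ∫ a, |g a - g' a| ∂(iterKernel κ' t μ) := by
            simpa [Real.norm_eq_abs] using
              norm_integral_le_integral_norm (μ := iterKernel κ' t μ) (fun a => g a - g' a)
        _ ≤ ∫ _a, 2 * ε ∂(iterKernel κ' t μ) := integral_mono
            ((integrable_of_bdd1 hgmeas hgbd).sub (integrable_of_bdd1 hg'meas hg'bd)).abs
            (integrable_const _) hdiffbd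
        _ = 2 * ε := by simp
    calc |∫ a, g a ∂(iterKernel κ t μ) - ∫ a, g' a ∂(iterKernel κ' t μ)|
        = |(∫ a, g a ∂(iterKernel κ t μ) - ∫ a, g a ∂(iterKernel κ' t μ))
            + (∫ a, g a ∂(iterKernel κ' t μ) - ∫ a, g' a ∂(iterKernel κ' t μ))| := by ring_nf
      _ ≤ |∫ a, g a ∂(iterKernel κ t μ) - ∫ a, g a ∂(iterKernel κ' t μ)|
            + |∫ a, g a ∂(iterKernel κ' t μ) - ∫ a, g' a ∂(iterKernel κ' t μ)| := abs_add_le _ _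
      _ ≤ 2 * t * ε + 2 * ε := add_le_add IH hsecond
      _ = 2 * (t + 1 : ℕ) * ε := by push_cast; ring

end Aux

/-- if two Markov kernels differ by at most `ε` on every state and measurable
set, then for any measurable utility `u` bounded by 1 and any discount factor `γ ∈ (0,1)`,
the truncated discounted values computed under the two kernels differ by at most
`2ε/(1-γ)²`, uniformly in the truncation horizon `T`. -/
theorem truncated_value_kernel_lipschitz
    {S : Type*} [MeasurableSpace S] (κ κ' : Kernel S S)
    [IsMarkovKernel κ] [IsMarkovKernel κ']
    (μ : Measure S) [IsProbabilityMeasure μ] (ε : ℝ) (hε : 0 ≤ ε)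
    (hclose : ∀ s : S, ∀ A : Set S, MeasurableSet A →
      |(κ s A).toReal - (κ' s A).toReal| ≤ ε)
    (u : S → ℝ) (humeas : Measurable u) (hubdd : ∀ s, |u s| ≤ 1)
    (γ : ℝ) (hγ : γ ∈ Set.Ioo (0 : ℝ) 1) (T : ℕ) (hT : 0 < T) :
    |∑ t ∈ Finset.range T, γ ^ t *
        ((∫ x, u x ∂(iterKernel κ t μ)) - ∫ x, u x ∂(iterKernel κ' t μ))|
      ≤ 2 * ε / (1 - γ) ^ 2 := by
  obtain ⟨hγ0, hγ1⟩ := hγ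
  have hγnorm : ‖γ‖ < 1 := by rw [Real.norm_eq_abs, abs_of_pos hγ0]; exact hγ1
  have hsummable : Summable (fun n : ℕ => (n : ℝ) * γ ^ n) :=
    (hasSum_coe_mul_geometric_of_norm_lt_one hγnorm).summable
  have hterm : ∀ t ∈ Finset.range T,
      |γ ^ t * ((∫ x, u x ∂(iterKernel κ t μ)) - ∫ x, u x ∂(iterKernel κ' t μ))|
        ≤ 2 * ε * ((t : ℝ) * γ ^ t) := by
    intro t _
    rw [abs_mul, abs_of_pos (pow_pos hγ0 t)]
    calc γ ^ t * |(∫ x, u x ∂(iterKernel κ t μ)) - ∫ x, u x ∂(iterKernel κ' t μ)|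
        ≤ γ ^ t * (2 * t * ε) := by
          apply mul_le_mul_of_nonneg_left _ (le_of_lt (pow_pos hγ0 t))
          exact iter_diff κ κ' μ hclose t u humeas hubdd
      _ = 2 * ε * ((t : ℝ) * γ ^ t) := by ring
  calc |∑ t ∈ Finset.range T, γ ^ t *
        ((∫ x, u x ∂(iterKernel κ t μ)) - ∫ x, u x ∂(iterKernel κ' t μ))|
      ≤ ∑ t ∈ Finset.range T,
          |γ ^ t * ((∫ x, u x ∂(iterKernel κ t μ)) - ∫ x, u x ∂(iterKernel κ' t μ))| :=
        Finset.abs_sum_le_sum_abs _ _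
    _ ≤ ∑ t ∈ Finset.range T, 2 * ε * ((t : ℝ) * γ ^ t) := Finset.sum_le_sum hterm
    _ = 2 * ε * ∑ t ∈ Finset.range T, (t : ℝ) * γ ^ t := by rw [Finset.mul_sum]
    _ ≤ 2 * ε * (γ / (1 - γ) ^ 2) := by
        apply mul_le_mul_of_nonneg_left _ (by linarith)
        rw [← tsum_coe_mul_geometric_of_norm_lt_one hγnorm]
        exact Summable.sum_le_tsum (Finset.range T)
          (fun n _ => mul_nonneg (Nat.cast_nonneg n) (le_of_lt (pow_pos hγ0 n))) hsummable
    _ ≤ 2 * ε * (1 / (1 - γ) ^ 2) := by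
        have h2 : (0:ℝ) < (1 - γ) ^ 2 := pow_pos (by linarith) 2
        gcongr
    _ = 2 * ε / (1 - γ) ^ 2 := by ring
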